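/- Let n ≥ 1 be an integer, m = 2n, ω = exp(2πi/m) ∈ ℂ, and let g : ℤ → ℝ satisfy g_j ≥ 0 for all j, with (g_j)_{j∈ℤ} summable and (j(j−1)g_j)_{j∈ℤ} summable; write g''(1) := ∑_{j∈ℤ} j(j−1)g_j. Let ĝ : ℤ → ℝ vanish outside {−n+1, …, n}, satisfy ∑_{j=−n+1}^{n} ĝ_j ω^{i j} = ∑_{j∈ℤ} g_j ω^{i j} for every i ∈ {−n+1, …, n}, and write ĝ''(1) := ∑_{j=−n+1}^{n} j(j−1) ĝ_j. If ε > 0 and g''(1) − ĝ''(1) < ε, then ∑_{j∈ℤ} |g_j − ĝ_j| ≤ (1 + 1/(2n))·ε. -/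

import Mathlib

open scoped Real

namespace InterpAux


/-- representative of `k` mod `2n` in `Icc (-n+1) n` -/
def r (n : ℕ) (k : ℤ) : ℤ := n - (n - k) % (2 * n)
def q (n : ℕ) (k : ℤ) : ℤ := -((n - k) / (2 * n))

lemma r_add_q (n : ℕ) (k : ℤ) : r n k + q n k * (2 * n) = k := by
  have h := Int.emod_add_mul_ediv (n - k) (2 * n)
  unfold r q
  linarith

lemma r_mem (n : ℕ) (hn : 1 ≤ n) (k : ℤ) :
    r n k ∈ Finset.Icc (-(n : ℤ) + 1) (n : ℤ) := by
  have h2n : (0:ℤ) < 2 * n := by positivity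
  have h1 := Int.emod_nonneg (n - k) (by positivity : (2*(n:ℤ)) ≠ 0)
  have h2 := Int.emod_lt_of_pos (n - k) h2n
  simp only [Finset.mem_Icc, r]
  omega

lemma r_spec (n : ℕ) (hn : 1 ≤ n) {j : ℤ} (hj : j ∈ Finset.Icc (-(n : ℤ) + 1) (n : ℤ))
    (l : ℤ) : r n (j + l * (2 * n)) = j := by
  simp only [Finset.mem_Icc] at hj
  have h2n : (0:ℤ) < 2 * n := by positivity
  unfold r
  have : ((n : ℤ) - (j + l * (2*n))) % (2*n) = ((n:ℤ) - j) % (2*n) := by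
    have : ((n : ℤ) - (j + l * (2*n))) = ((n:ℤ) - j) + (-l) * (2*n) := by ring
    rw [this, Int.add_mul_emod_self_right]
  rw [this, Int.emod_eq_of_lt (by omega) (by omega)]
  omega

lemma q_spec (n : ℕ) (hn : 1 ≤ n) {j : ℤ} (hj : j ∈ Finset.Icc (-(n : ℤ) + 1) (n : ℤ))
    (l : ℤ) : q n (j + l * (2 * n)) = l := by
  have h1 := r_add_q n (j + l * (2 * n))
  have h2 := r_spec n hn hj l
  have h2n : (0:ℤ) < 2 * n := by positivity
  have : q n (j + l * (2 * n)) * (2 * n) = l * (2 * n) := by omega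
  exact mul_right_cancel₀ (by positivity) this

/-- the folding equivalence -/
def e (n : ℕ) (hn : 1 ≤ n) :
    ((Finset.Icc (-(n : ℤ) + 1) (n : ℤ) : Finset ℤ) × ℤ) ≃ ℤ where
  toFun p := (p.1 : ℤ) + p.2 * (2 * n)
  invFun k := (⟨r n k, r_mem n hn k⟩, q n k)
  left_inv p := by
    ext
    · exact r_spec n hn p.1.2 p.2
    · exact q_spec n hn p.1.2 p.2
  right_inv k := r_add_q n k

lemma slice_summable {E : Type*} [NormedAddCommGroup E] [CompleteSpace E]
    (n : ℕ) (hn : 1 ≤ n) (f : ℤ → E) (hf : Summable f) (j : ℤ) :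
    Summable fun l : ℤ => f (j + l * (2 * n)) := by
  apply hf.comp_injective
  intro a b hab
  have h2n : (0:ℤ) < 2 * n := by positivity
  simp only at hab
  have : a * (2*(n:ℤ)) = b * (2*n) := by omega
  exact mul_right_cancel₀ (by positivity) this

lemma fold_tsum {E : Type*} [NormedAddCommGroup E] [CompleteSpace E]
    (n : ℕ) (hn : 1 ≤ n) (f : ℤ → E) (hf : Summable f) :
    ∑' k : ℤ, f k = ∑ j ∈ Finset.Icc (-(n : ℤ) + 1) (n : ℤ),
      ∑' l : ℤ, f (j + l * (2 * n)) := by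
  rw [← (e n hn).tsum_eq f]
  have hsf : Summable fun p : ((Finset.Icc (-(n : ℤ) + 1) (n : ℤ) : Finset ℤ) × ℤ) =>
      f ((p.1 : ℤ) + p.2 * (2 * n)) := ((e n hn).summable_iff (f := f)).mpr hf
  show (∑' p : ((Finset.Icc (-(n : ℤ) + 1) (n : ℤ) : Finset ℤ) × ℤ),
      f ((p.1 : ℤ) + p.2 * (2 * n))) = _
  rw [Summable.tsum_prod' hsf (fun j => slice_summable n hn f hf j)]
  rw [tsum_fintype]
  exact Finset.sum_coe_sort _ (fun j => ∑' l : ℤ, f (j + l * (2 * n)))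



lemma omega_zpow (n : ℕ) (ω : ℂ)
    (hω : ω = Complex.exp (2 * π * Complex.I / (2 * n))) (d : ℤ) :
    ω ^ d = Complex.exp (d * (2 * π * Complex.I / (2 * n))) := by
  rw [hω, ← Complex.exp_int_mul]

lemma omega_ne_zero (n : ℕ) (ω : ℂ)
    (hω : ω = Complex.exp (2 * π * Complex.I / (2 * n))) : ω ≠ 0 := by
  rw [hω]; exact Complex.exp_ne_zero _

lemma omega_abs (n : ℕ) (ω : ℂ)
    (hω : ω = Complex.exp (2 * π * Complex.I / (2 * n))) : ‖ω‖ = 1 := by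
  have h : (2 * ↑π * Complex.I / (2 * n) : ℂ) = ((2 * π / (2 * n) : ℝ) : ℂ) * Complex.I := by
    push_cast; ring
  rw [hω, h, Complex.norm_exp_ofReal_mul_I]

lemma omega_pow_eq_one_iff (n : ℕ) (hn : 1 ≤ n) (ω : ℂ)
    (hω : ω = Complex.exp (2 * π * Complex.I / (2 * n))) (d : ℤ) :
    ω ^ d = 1 ↔ (2 * (n:ℤ)) ∣ d := by
  have hnC : ((n : ℂ)) ≠ 0 := by
    simp; omega
  have hpI : (2 * ↑π * Complex.I : ℂ) ≠ 0 := by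
    simp [Real.pi_ne_zero, Complex.I_ne_zero]
  rw [omega_zpow n ω hω, Complex.exp_eq_one_iff]
  constructor
  · rintro ⟨k, hk⟩
    refine ⟨k, ?_⟩
    field_simp [hnC] at hk
    have h3 : (d : ℂ) * (2 * ↑π * Complex.I) = ((2 * n * k : ℤ) : ℂ) * (2 * ↑π * Complex.I) := by
      push_cast
      linear_combination (2 * ↑π * Complex.I) * hk
    have := mul_right_cancel₀ hpI h3
    exact_mod_cast this
  · rintro ⟨k, rfl⟩
    refine ⟨k, ?_⟩
    push_cast
    field_simp

lemma geom_zpow_sum (n : ℕ) (hn : 1 ≤ n) (z : ℂ) (hz0 : z ≠ 0) (hz1 : z ≠ 1)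
    (hzm : z ^ (2 * n) = 1) :
    ∑ i ∈ Finset.Icc (-(n : ℤ) + 1) (n : ℤ), z ^ i = 0 := by
  have key : ∑ i ∈ Finset.Icc (-(n:ℤ)+1) (n:ℤ), z ^ i
      = ∑ t ∈ Finset.range (2*n), z ^ (-(n:ℤ)+1) * z ^ (t : ℕ) := by
    refine Finset.sum_nbij' (i := fun i => (i - (-(n:ℤ)+1)).toNat)
      (j := fun t => (t : ℤ) + (-(n:ℤ)+1)) ?_ ?_ ?_ ?_ ?_
    · intro a ha
      simp only [Finset.mem_Icc] at ha
      simp only [Finset.mem_range]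
      omega
    · intro t ht
      simp only [Finset.mem_range] at ht
      simp only [Finset.mem_Icc]
      omega
    · intro a ha
      simp only [Finset.mem_Icc] at ha
      omega
    · intro t ht
      simp only [Finset.mem_range] at ht
      omega
    · intro a ha
      simp only [Finset.mem_Icc] at ha
      rw [← zpow_natCast z ((a - (-(n:ℤ)+1)).toNat), ← zpow_add₀ hz0]
      congr 1
      omega
  rw [key, ← Finset.mul_sum, geom_sum_eq hz1, hzm]
  simp

lemma orth (n : ℕ) (hn : 1 ≤ n) (ω : ℂ)
    (hω : ω = Complex.exp (2 * π * Complex.I / (2 * n)))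
    {j j0 : ℤ} (hj : j ∈ Finset.Icc (-(n : ℤ) + 1) (n : ℤ))
    (hj0 : j0 ∈ Finset.Icc (-(n : ℤ) + 1) (n : ℤ)) :
    ∑ i ∈ Finset.Icc (-(n : ℤ) + 1) (n : ℤ), ω ^ (i * (j - j0)) =
      if j = j0 then ((2 * n : ℕ) : ℂ) else 0 := by
  have hω0 := omega_ne_zero n ω hω
  by_cases hjj : j = j0
  · subst hjj
    simp only [sub_self, mul_zero, zpow_zero, if_pos rfl, Finset.sum_const, nsmul_eq_mul, mul_one]
    congr 1
    rw [Int.card_Icc]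
    push_cast
    omega
  · rw [if_neg hjj]
    simp only [Finset.mem_Icc] at hj hj0
    set d := j - j0 with hd
    have hd0 : d ≠ 0 := sub_ne_zero.mpr hjj
    have hdlt : |d| < 2 * n := by
      rw [abs_lt]; omega
    have hrw : ∀ i : ℤ, ω ^ (i * d) = (ω ^ d) ^ i := by
      intro i
      rw [← zpow_mul, mul_comm]
    simp_rw [hrw]
    apply geom_zpow_sum n hn _ (zpow_ne_zero _ hω0)
    · rw [Ne, omega_pow_eq_one_iff n hn ω hω]
      intro hdvd
      have hdd : (2 * (n:ℤ)) ∣ |d| := (dvd_abs _ _).mpr hdvd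
      have := Int.le_of_dvd (abs_pos.mpr hd0) hdd
      omega
    · rw [← zpow_natCast (ω ^ d), ← zpow_mul]
      have : d * (2 * n : ℕ) = (2 * (n:ℤ)) * d := by push_cast; ring
      rw [this, zpow_mul]
      rw [(omega_pow_eq_one_iff n hn ω hω (2 * n)).mpr dvd_rfl]
      simp

lemma dft_inv (n : ℕ) (hn : 1 ≤ n) (ω : ℂ)
    (hω : ω = Complex.exp (2 * π * Complex.I / (2 * n)))
    (a : ℤ → ℂ)
    (h : ∀ i ∈ Finset.Icc (-(n : ℤ) + 1) (n : ℤ),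
      ∑ j ∈ Finset.Icc (-(n : ℤ) + 1) (n : ℤ), a j * ω ^ (i * j) = 0) :
    ∀ j0 ∈ Finset.Icc (-(n : ℤ) + 1) (n : ℤ), a j0 = 0 := by
  intro j0 hj0
  have hω0 := omega_ne_zero n ω hω
  have h0 : ∑ i ∈ Finset.Icc (-(n : ℤ) + 1) (n : ℤ),
      (∑ j ∈ Finset.Icc (-(n : ℤ) + 1) (n : ℤ), a j * ω ^ (i * j)) * ω ^ (-(i * j0)) = 0 :=
    Finset.sum_eq_zero fun i hi => by rw [h i hi, zero_mul]
  have h1 : ∑ i ∈ Finset.Icc (-(n : ℤ) + 1) (n : ℤ),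
      (∑ j ∈ Finset.Icc (-(n : ℤ) + 1) (n : ℤ), a j * ω ^ (i * j)) * ω ^ (-(i * j0)) =
      ∑ j ∈ Finset.Icc (-(n : ℤ) + 1) (n : ℤ),
        a j * ∑ i ∈ Finset.Icc (-(n : ℤ) + 1) (n : ℤ), ω ^ (i * (j - j0)) := by
    have step : ∀ i ∈ Finset.Icc (-(n : ℤ) + 1) (n : ℤ),
        (∑ j ∈ Finset.Icc (-(n : ℤ) + 1) (n : ℤ), a j * ω ^ (i * j)) * ω ^ (-(i * j0)) =
        ∑ j ∈ Finset.Icc (-(n : ℤ) + 1) (n : ℤ), a j * ω ^ (i * (j - j0)) := by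
      intro i _
      rw [Finset.sum_mul]
      refine Finset.sum_congr rfl fun j _ => ?_
      rw [mul_assoc, ← zpow_add₀ hω0]
      congr 2
      ring
    rw [Finset.sum_congr rfl step, Finset.sum_comm]
    exact Finset.sum_congr rfl fun j _ => (Finset.mul_sum _ _ _).symm
  rw [h1] at h0
  have h4 : ∀ j ∈ Finset.Icc (-(n : ℤ) + 1) (n : ℤ),
      a j * ∑ i ∈ Finset.Icc (-(n : ℤ) + 1) (n : ℤ), ω ^ (i * (j - j0)) =
      if j = j0 then a j * ((2 * n : ℕ) : ℂ) else 0 := by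
    intro j hj
    rw [orth n hn ω hω hj hj0]
    split <;> simp
  rw [Finset.sum_congr rfl h4, Finset.sum_ite_eq' _ j0, if_pos hj0] at h0
  have h2n : ((2 * n : ℕ) : ℂ) ≠ 0 := by
    simp; omega
  exact (mul_eq_zero.mp h0).resolve_right h2n


end InterpAux


/-- Wiener-norm accuracy of the interpolation: with `g`, `gh` (`= ĝ`) as in the
interpolation lemma (nonnegative summable coefficients, summable second derivative,
`gh` supported on `{−n+1, …, n}` and interpolating `g` at the `2n`-th roots of
unity), if `g''(1) − gh''(1) < ε` then `‖g − gh‖_W = ∑_{j ∈ ℤ} |g_j − gh_j| ≤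
(1 + 1/(2n)) ε`. -/
theorem interpolation_wiener_norm_bound
    (n : ℕ) (hn : 1 ≤ n)
    (ω : ℂ) (hω : ω = Complex.exp (2 * π * Complex.I / (2 * n)))
    (g : ℤ → ℝ) (hgpos : ∀ j : ℤ, 0 ≤ g j)
    (hgsum : Summable g)
    (hgsum2 : Summable fun j : ℤ => (j : ℝ) * ((j : ℝ) - 1) * g j)
    (gh : ℤ → ℝ)
    (hsupp : ∀ j : ℤ, j ∉ Finset.Icc (-(n : ℤ) + 1) (n : ℤ) → gh j = 0)
    (hinterp : ∀ i ∈ Finset.Icc (-(n : ℤ) + 1) (n : ℤ),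
      ∑ j ∈ Finset.Icc (-(n : ℤ) + 1) (n : ℤ), (gh j : ℂ) * ω ^ (i * j) =
        ∑' j : ℤ, (g j : ℂ) * ω ^ (i * j))
    (ε : ℝ) (hε : 0 < ε)
    (herr : (∑' j : ℤ, (j : ℝ) * ((j : ℝ) - 1) * g j) -
        (∑ j ∈ Finset.Icc (-(n : ℤ) + 1) (n : ℤ), (j : ℝ) * ((j : ℝ) - 1) * gh j) < ε) :
    ∑' j : ℤ, |g j - gh j| ≤ (1 + 1 / (2 * n)) * ε := by
  have hω0 := InterpAux.omega_ne_zero n ω hω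
  have hωabs := InterpAux.omega_abs n ω hω
  set W := Finset.Icc (-(n : ℤ) + 1) (n : ℤ) with hWdef
  -- summability of the complex weighted series
  have hsumC : ∀ i : ℤ, Summable fun k : ℤ => (g k : ℂ) * ω ^ (i * k) := by
    intro i
    apply Summable.of_norm
    refine Summable.congr hgsum fun k => ?_
    rw [norm_mul, Complex.norm_real, norm_zpow, hωabs, one_zpow,
      mul_one, Real.norm_eq_abs, abs_of_nonneg (hgpos k)]
  -- folded coefficients
  set G : ℤ → ℝ := fun j => ∑' l : ℤ, g (j + l * (2 * (n : ℤ))) with hGdef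
  have hGsum : ∀ j : ℤ, Summable fun l : ℤ => g (j + l * (2 * (n : ℤ))) := fun j =>
    InterpAux.slice_summable n hn g hgsum j
  -- aliasing
  have halias : ∀ i ∈ W, (∑' k : ℤ, (g k : ℂ) * ω ^ (i * k)) =
      ∑ j ∈ W, (G j : ℂ) * ω ^ (i * j) := by
    intro i _
    rw [InterpAux.fold_tsum n hn _ (hsumC i)]
    refine Finset.sum_congr rfl fun j _ => ?_
    have hterm : ∀ l : ℤ, (g (j + l * (2 * (n:ℤ))) : ℂ) * ω ^ (i * (j + l * (2 * (n:ℤ)))) =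
        (g (j + l * (2 * (n:ℤ))) : ℂ) * ω ^ (i * j) := by
      intro l
      congr 1
      have h1 : i * (j + l * (2 * (n:ℤ))) = i * j + (i * l) * (2 * (n:ℤ)) := by ring
      rw [h1, zpow_add₀ hω0, zpow_mul]
      rw [show ((i*l) * (2 * (n:ℤ))) = (2 * (n:ℤ)) * (i * l) from by ring] at *
      rw [(InterpAux.omega_pow_eq_one_iff n hn ω hω _).mpr ⟨i * l, rfl⟩, mul_one]
    calc (∑' l : ℤ, (g (j + l * (2 * (n:ℤ))) : ℂ) * ω ^ (i * (j + l * (2 * (n:ℤ)))))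
        = ∑' l : ℤ, (g (j + l * (2 * (n:ℤ))) : ℂ) * ω ^ (i * j) := tsum_congr hterm
      _ = (∑' l : ℤ, (g (j + l * (2 * (n:ℤ))) : ℂ)) * ω ^ (i * j) := tsum_mul_right
      _ = (G j : ℂ) * ω ^ (i * j) := by rw [hGdef, Complex.ofReal_tsum]
  -- DFT inversion: gh = G on W
  have hghG : ∀ j ∈ W, gh j = G j := by
    have hz : ∀ i ∈ W, ∑ j ∈ W, ((gh j : ℂ) - (G j : ℂ)) * ω ^ (i * j) = 0 := by
      intro i hi
      simp only [sub_mul, Finset.sum_sub_distrib]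
      rw [hinterp i hi, halias i hi, sub_self]
    intro j hj
    have h := InterpAux.dft_inv n hn ω hω _ hz j hj
    have h2 : (gh j : ℂ) = (G j : ℂ) := sub_eq_zero.mp h
    exact_mod_cast h2
  -- basic real facts
  have hgleG : ∀ j : ℤ, g j ≤ G j := by
    intro j
    have h1 : g j = g (j + 0 * (2 * (n : ℤ))) := by norm_num
    rw [hGdef, h1]
    exact Summable.le_tsum (hGsum j) 0 fun l _ => hgpos _
  have hsumWG : ∑ j ∈ W, G j = ∑' k : ℤ, g k := (InterpAux.fold_tsum n hn g hgsum).symm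
  have hghsum : Summable gh := summable_of_ne_finset_zero hsupp
  set T : ℝ := ∑' k : ℤ, g k with hTdef
  set S : ℝ := ∑ j ∈ W, g j with hSdef
  have hST : S ≤ T := Summable.sum_le_tsum W (fun k _ => hgpos k) hgsum
  -- the indicator of the complement of W
  set ψ : ℤ → ℝ := fun k => if k ∈ W then 0 else g k with hψdef
  have hψpos : ∀ k, 0 ≤ ψ k := by
    intro k; rw [hψdef]; dsimp only; split
    exacts [le_rfl, hgpos k]
  have hψle : ∀ k, ψ k ≤ g k := by
    intro k; rw [hψdef]; dsimp only; split
    exacts [hgpos k, le_rfl]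
  have hψsum : Summable ψ := hgsum.of_nonneg_of_le hψpos hψle
  have hψtsum : ∑' k : ℤ, ψ k = T - S := by
    have h1 : ∀ k, ψ k = g k - (if k ∈ W then g k else 0) := by
      intro k; rw [hψdef]; dsimp only; split <;> simp
    have h2 : Summable fun k : ℤ => if k ∈ W then g k else (0:ℝ) :=
      summable_of_ne_finset_zero (s := W) fun k hk => if_neg hk
    have h3 : (∑' k : ℤ, (if k ∈ W then g k else (0:ℝ))) = S := by
      rw [tsum_eq_sum (s := W) fun k hk => if_neg hk]
      exact Finset.sum_congr rfl fun k hk => if_pos hk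
    rw [tsum_congr h1, Summable.tsum_sub hgsum h2, h3]
  -- express the Wiener norm
  have habs : ∀ j, |g j - gh j| = (gh j - g j) + 2 * ψ j := by
    intro j; rw [hψdef]; dsimp only; split
    · rename_i hj
      rw [hghG j hj, abs_of_nonpos (by linarith [hgleG j])]
      ring
    · rename_i hj
      rw [hsupp j hj, abs_of_nonneg (by simpa using hgpos j)]
      ring
  have hghtsum : ∑' j : ℤ, gh j = ∑ j ∈ W, gh j := tsum_eq_sum fun j hj => hsupp j hj
  have hWgh : ∑ j ∈ W, gh j = T := by
    rw [Finset.sum_congr rfl hghG, hsumWG]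
  have hsum_ghg : Summable fun j : ℤ => gh j - g j := hghsum.sub hgsum
  have hmain : ∑' j : ℤ, |g j - gh j| = 2 * (T - S) := by
    rw [tsum_congr habs, Summable.tsum_add hsum_ghg (hψsum.mul_left 2), Summable.tsum_sub hghsum hgsum,
      hghtsum, hWgh, sub_self, zero_add, tsum_mul_left, hψtsum]
  -- second derivative comparison
  have hrmem : ∀ k, InterpAux.r n k ∈ W := fun k => InterpAux.r_mem n hn k
  set φ : ℤ → ℝ := fun k => ((InterpAux.r n k : ℤ) : ℝ) * (((InterpAux.r n k : ℤ) : ℝ) - 1)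
    with hφdef
  have hrb : ∀ k, -(n:ℝ)+1 ≤ ((InterpAux.r n k : ℤ) : ℝ) ∧ ((InterpAux.r n k : ℤ) : ℝ) ≤ n := by
    intro k
    have h := Finset.mem_Icc.mp (hrmem k)
    constructor
    · exact_mod_cast h.1
    · exact_mod_cast h.2
  have hφ0 : ∀ k, 0 ≤ φ k := by
    intro k
    have h : (0:ℤ) ≤ InterpAux.r n k * (InterpAux.r n k - 1) := by
      rcases le_or_gt (InterpAux.r n k) 0 with h | h <;> nlinarith
    rw [hφdef]; dsimp only
    exact_mod_cast h
  have hφn : ∀ k, φ k ≤ (n:ℝ) * ((n:ℝ) - 1) := by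
    intro k
    rw [hφdef]; dsimp only
    nlinarith [(hrb k).1, (hrb k).2]
  have hφgsum : Summable fun k : ℤ => φ k * g k := by
    refine Summable.of_nonneg_of_le (fun k => mul_nonneg (hφ0 k) (hgpos k))
      (fun k => mul_le_mul_of_nonneg_right (hφn k) (hgpos k)) (hgsum.mul_left _)
  have hhat : ∑ j ∈ W, (j:ℝ) * ((j:ℝ) - 1) * gh j = ∑' k : ℤ, φ k * g k := by
    rw [InterpAux.fold_tsum n hn (fun k => φ k * g k) hφgsum]
    refine Finset.sum_congr rfl fun j hj => ?_
    rw [hghG j hj, hGdef]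
    dsimp only
    rw [← tsum_mul_left]
    refine tsum_congr fun l => ?_
    have hr : InterpAux.r n (j + l * (2 * (n:ℤ))) = j := InterpAux.r_spec n hn hj l
    rw [hφdef]
    dsimp only
    rw [hr]
  have hφsub : Summable fun k : ℤ => ((k:ℝ) * ((k:ℝ) - 1) - φ k) * g k :=
    Summable.congr (hgsum2.sub hφgsum) fun k => by ring
  have hdiff : (∑' j : ℤ, (j:ℝ) * ((j:ℝ) - 1) * g j) - (∑' k : ℤ, φ k * g k)
      = ∑' k : ℤ, ((k:ℝ) * ((k:ℝ) - 1) - φ k) * g k := by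
    rw [← Summable.tsum_sub hgsum2 hφgsum]
    exact tsum_congr fun k => by ring
  set χ : ℤ → ℝ := fun k => if k ∈ W then 0 else (2*(n:ℝ)) * g k with hχdef
  have hχle : ∀ k, χ k ≤ ((k:ℝ) * ((k:ℝ) - 1) - φ k) * g k := by
    intro k
    rw [hχdef]; dsimp only; split
    · rename_i hk
      have hrk : InterpAux.r n k = k := by
        have h := InterpAux.r_spec n hn hk 0
        simpa using h
      have h0 : (k:ℝ) * ((k:ℝ) - 1) - φ k = 0 := by
        rw [hφdef]; dsimp only; rw [hrk]; ring
      rw [h0, zero_mul]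
    · rename_i hk
      have hk' : ¬(-(n:ℤ) + 1 ≤ k ∧ k ≤ (n:ℤ)) := by
        simpa [hWdef, Finset.mem_Icc] using hk
      have hrw := Finset.mem_Icc.mp (hrmem k)
      have hint : 2*(n:ℤ) ≤ k * (k - 1) - InterpAux.r n k * (InterpAux.r n k - 1) := by
        rcases (by omega : k ≤ -(n:ℤ) ∨ (n:ℤ) + 1 ≤ k) with h | h
        · nlinarith [hrw.1, hrw.2, mul_nonneg (by omega : (0:ℤ) ≤ -(k + n))
            (by omega : (0:ℤ) ≤ -(k - n - 1)),
            mul_nonneg (by omega : (0:ℤ) ≤ (n:ℤ) - InterpAux.r n k)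
            (by omega : (0:ℤ) ≤ (n:ℤ) + InterpAux.r n k - 1)]
        · nlinarith [hrw.1, hrw.2, mul_nonneg (by omega : (0:ℤ) ≤ k - n - 1)
            (by omega : (0:ℤ) ≤ k + n),
            mul_nonneg (by omega : (0:ℤ) ≤ (n:ℤ) - InterpAux.r n k)
            (by omega : (0:ℤ) ≤ (n:ℤ) + InterpAux.r n k - 1)]
      have hreal : 2*(n:ℝ) ≤ (k:ℝ) * ((k:ℝ) - 1) - φ k := by
        rw [hφdef]; dsimp only
        exact_mod_cast hint
      exact mul_le_mul_of_nonneg_right hreal (hgpos k)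
  have hχeq : ∀ k, χ k = 2*(n:ℝ) * ψ k := by
    intro k; rw [hχdef, hψdef]; dsimp only; split <;> simp
  have hχsum : Summable χ := Summable.congr (hψsum.mul_left (2*(n:ℝ))) fun k => (hχeq k).symm
  have hχtsum : ∑' k : ℤ, χ k = 2*(n:ℝ) * (T - S) := by
    rw [tsum_congr hχeq, tsum_mul_left, hψtsum]
  have hkey : 2*(n:ℝ) * (T - S) < ε := by
    calc 2*(n:ℝ) * (T - S) = ∑' k : ℤ, χ k := hχtsum.symm
      _ ≤ ∑' k : ℤ, ((k:ℝ) * ((k:ℝ) - 1) - φ k) * g k := Summable.tsum_le_tsum hχle hχsum hφsub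
      _ = (∑' j : ℤ, (j:ℝ) * ((j:ℝ) - 1) * g j) - (∑' k : ℤ, φ k * g k) := hdiff.symm
      _ < ε := by rw [← hhat]; exact herr
  -- conclude
  rw [hmain]
  have hn' : (1:ℝ) ≤ n := by exact_mod_cast hn
  have hTS : 0 ≤ T - S := by linarith
  have h3 : 0 < 1/(2*(n:ℝ)) := by positivity
  nlinarith [mul_pos h3 hε, hkey, hTS, hn']
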